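/- Let x be a valid allocation such that every agent's total allocation is an integer, i.e., ∑_c x_{a,c} ∈ {0,1} for every a ∈ A. Then x can be represented as a convex combination of valid integral allocations, each of which gives every agent the same total allocation as x. -/

import Mathlib

open Finset

/-- An allocation instance: quotas, eligibility sets, and priority relations. -/
structure AllocInstance (A C : Type*) where
  quota : C → ℕ
  elig : C → Set A
  prio : C → A → A → Prop

namespace AllocInstance

variable {A C : Type*} [Fintype A] [Fintype C]

/-- Strict priority: `a ≻_c a'`. -/
def Strict (I : AllocInstance A C) (c : C) (a a' : A) : Prop :=
  I.prio c a a' ∧ ¬ I.prio c a' a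

/-- The priority relation of each category is a total preorder on its eligible set. -/
def TotalPreorder (I : AllocInstance A C) : Prop :=
  (∀ c, ∀ a ∈ I.elig c, I.prio c a a) ∧
  (∀ c, ∀ a ∈ I.elig c, ∀ a' ∈ I.elig c, ∀ a'' ∈ I.elig c,
      I.prio c a a' → I.prio c a' a'' → I.prio c a a'') ∧
  (∀ c, ∀ a ∈ I.elig c, ∀ a' ∈ I.elig c, I.prio c a a' ∨ I.prio c a' a)

/-- The priority relation of each category is a (strict) total order on its eligible
set, i.e. an antisymmetric total preorder. -/
def StrictTotalPrio (I : AllocInstance A C) : Prop :=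
  I.TotalPreorder ∧
  (∀ c, ∀ a ∈ I.elig c, ∀ a' ∈ I.elig c, I.prio c a a' → I.prio c a' a → a = a')

/-- A feasible allocation: nonnegative, eligibility (ER), quotas (QR), unit demand. -/
def Feasible (I : AllocInstance A C) (x : A → C → ℝ) : Prop :=
  (∀ a c, 0 ≤ x a c) ∧
  (∀ a c, a ∉ I.elig c → x a c = 0) ∧
  (∀ c, ∑ a, x a c ≤ (I.quota c : ℝ)) ∧
  (∀ a, ∑ c, x a c ≤ 1)

/-- The size of an allocation. -/
def V (_I : AllocInstance A C) (x : A → C → ℝ) : ℝ := ∑ a, ∑ c, x a c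

/-- Respect for priorities (PR). -/
def PR (I : AllocInstance A C) (x : A → C → ℝ) : Prop :=
  ∀ c, ∀ a ∈ I.elig c, ∀ a' ∈ I.elig c,
    I.Strict c a' a → 0 < x a c → ∑ c', x a' c' = 1

/-- Pareto efficiency (PE). -/
def PE (I : AllocInstance A C) (x : A → C → ℝ) : Prop :=
  ¬ ∃ y, I.Feasible y ∧ I.PR y ∧
    (∀ a, ∑ c, x a c ≤ ∑ c, y a c) ∧ (∃ a, ∑ c, x a c < ∑ c, y a c)

/-- A valid allocation: feasible, respecting priorities, and Pareto efficient. -/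
def Valid (I : AllocInstance A C) (x : A → C → ℝ) : Prop :=
  I.Feasible x ∧ I.PR x ∧ I.PE x

/-- An integral allocation. -/
def Integral (_I : AllocInstance A C) (x : A → C → ℝ) : Prop :=
  ∀ a c, x a c = 0 ∨ x a c = 1

/-- A valid perturbation profile: positivity, small effect, consistency. -/
def ValidPerturbation (I : AllocInstance A C) (δ : A → C → ℝ) : Prop :=
  (∀ a c, 0 < δ a c) ∧
  (∑ a, ∑ c, δ a c ≤ 1 / 2) ∧
  (∀ c, ∀ a ∈ I.elig c, ∀ a' ∈ I.elig c, (I.prio c a a' ↔ δ a' c ≥ δ a c))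

/-- The perturbed objective `V_δ`. -/
def Vd (_I : AllocInstance A C) (δ x : A → C → ℝ) : ℝ :=
  ∑ a, ∑ c, x a c * (1 - δ a c)

/-- Category stability (CS): no cyclic trade among categories in which some category
passes its allocation to a strictly higher-priority agent. -/
def CS (I : AllocInstance A C) (x : A → C → ℝ) : Prop :=
  ¬ ∃ (j : ℕ) (c : ℕ → C) (a : ℕ → A),
      2 ≤ j ∧ c j = c 0 ∧ a j = a 0 ∧
      (∀ i < j, 0 < x (a i) (c i) ∧ I.prio (c i) (a (i + 1)) (a i)) ∧
      (∃ i < j, I.Strict (c i) (a (i + 1)) (a i))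

end AllocInstance



section Helpers
variable {A C : Type*} [Fintype A] [Fintype C]

lemma sum01 {ι : Type*} (s : Finset ι) (f : ι → ℝ) (h : ∀ i ∈ s, f i = 0 ∨ f i = 1) :
    ∃ m : ℕ, (m : ℝ) = ∑ i ∈ s, f i := by
  classical
  induction s using Finset.induction with
  | empty => exact ⟨0, by simp⟩
  | @insert a s ha ih =>
    obtain ⟨m, hm⟩ := ih (fun i hi => h i (Finset.mem_insert_of_mem hi))
    rcases h _ (Finset.mem_insert_self _ _) with h0 | h1
    · exact ⟨m, by rw [Finset.sum_insert ha, h0, zero_add, hm]⟩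
    · exact ⟨m + 1, by rw [Finset.sum_insert ha, h1, ← hm]; push_cast; ring⟩

lemma core [DecidableEq A] [DecidableEq C]
    (F : Finset (A × C)) (hF : F.Nonempty)
    (hrow : ∀ a ∈ F.image Prod.fst, 2 ≤ (F.filter (fun p => p.1 = a)).card) :
    ∃ d : A → C → ℝ, (∃ a c, d a c ≠ 0) ∧ (∀ a c, (a, c) ∉ F → d a c = 0) ∧
      (∀ a, ∑ c, d a c = 0) ∧
      (∀ c, ∑ a, d a c = 0 ∨ (F.filter (fun p => p.2 = c)).card = 1) := by
  classical
  set AF : Finset A := F.image Prod.fst with hAFdef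
  set CF : Finset C := F.image Prod.snd with hCFdef
  set C2 : Finset C := CF.filter (fun c => 2 ≤ (F.filter (fun p => p.2 = c)).card) with hC2def
  have hAFne : AF.Nonempty := hF.image _
  -- counting
  have hcardA : 2 * AF.card ≤ F.card := by
    rw [Finset.card_eq_sum_card_fiberwise (f := Prod.fst) (t := AF)
        (fun p hp => Finset.mem_image_of_mem _ hp)]
    calc 2 * AF.card = ∑ _a ∈ AF, 2 := by rw [Finset.sum_const, smul_eq_mul, mul_comm]
    _ ≤ _ := Finset.sum_le_sum hrow
  have hcardC : 2 * C2.card + (CF.filter (fun c => ¬ 2 ≤ (F.filter (fun p => p.2 = c)).card)).card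
      ≤ F.card := by
    rw [Finset.card_eq_sum_card_fiberwise (f := Prod.snd) (t := CF)
        (fun p hp => Finset.mem_image_of_mem _ hp),
      ← Finset.sum_filter_add_sum_filter_not CF (fun c => 2 ≤ (F.filter (fun p => p.2 = c)).card)]
    have h1 : 2 * C2.card ≤ ∑ c ∈ C2, (F.filter (fun p => p.2 = c)).card := by
      calc 2 * C2.card = ∑ _c ∈ C2, 2 := by rw [Finset.sum_const, smul_eq_mul, mul_comm]
      _ ≤ _ := Finset.sum_le_sum (fun c hc => (Finset.mem_filter.mp hc).2)
    have h2 : (CF.filter (fun c => ¬ 2 ≤ (F.filter (fun p => p.2 = c)).card)).card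
        ≤ ∑ c ∈ CF.filter (fun c => ¬ 2 ≤ (F.filter (fun p => p.2 = c)).card),
            (F.filter (fun p => p.2 = c)).card := by
      rw [Finset.card_eq_sum_ones]
      refine Finset.sum_le_sum (fun c hc => ?_)
      have hcCF := (Finset.mem_filter.mp hc).1
      obtain ⟨p, hp, hpc⟩ := Finset.mem_image.mp hcCF
      exact Finset.card_pos.mpr ⟨p, Finset.mem_filter.mpr ⟨hp, hpc⟩⟩
    exact Nat.add_le_add h1 h2
  -- the linear map
  set rowF : ↥AF → ((↥F → ℝ) →ₗ[ℝ] ℝ) := fun a =>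
    ∑ p ∈ Finset.univ.filter (fun p : ↥F => (p : A × C).1 = ↑a), LinearMap.proj p with hrowF
  set colF : ↥C2 → ((↥F → ℝ) →ₗ[ℝ] ℝ) := fun c =>
    ∑ p ∈ Finset.univ.filter (fun p : ↥F => (p : A × C).2 = ↑c), LinearMap.proj p with hcolF
  set T : (↥F → ℝ) →ₗ[ℝ] ((↥AF → ℝ) × (↥C2 → ℝ)) :=
    (LinearMap.pi (fun a => rowF a)).prod (LinearMap.pi (fun c => colF c)) with hT
  have hTapp1 : ∀ (d : ↥F → ℝ) (a : ↥AF),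
      (T d).1 a = ∑ p ∈ Finset.univ.filter (fun p : ↥F => (p : A × C).1 = ↑a), d p := by
    intro d a
    simp [hT, hrowF, LinearMap.pi_apply, LinearMap.sum_apply, LinearMap.proj_apply]
  have hTapp2 : ∀ (d : ↥F → ℝ) (c : ↥C2),
      (T d).2 c = ∑ p ∈ Finset.univ.filter (fun p : ↥F => (p : A × C).2 = ↑c), d p := by
    intro d c
    simp [hT, hcolF, LinearMap.pi_apply, LinearMap.sum_apply, LinearMap.proj_apply]
  -- the rank bound
  have hdim : Module.finrank ℝ ((↥AF → ℝ) × (↥C2 → ℝ)) = AF.card + C2.card := by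
    rw [Module.finrank_prod, Module.finrank_fintype_fun_eq_card,
      Module.finrank_fintype_fun_eq_card, Fintype.card_coe, Fintype.card_coe]
  have hrank : Module.finrank ℝ (LinearMap.range T) < F.card := by
    by_cases h1 : (CF.filter (fun c => ¬ 2 ≤ (F.filter (fun p => p.2 = c)).card)).Nonempty
    · have hle : Module.finrank ℝ (LinearMap.range T) ≤ AF.card + C2.card :=
        le_trans (Submodule.finrank_le _) (le_of_eq hdim)
      have hpos : 1 ≤ (CF.filter (fun c => ¬ 2 ≤ (F.filter (fun p => p.2 = c)).card)).card :=
        Finset.card_pos.mpr h1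
      omega
    · -- every column has ≥ 2 fractional entries; use the dependency functional
      rw [Finset.not_nonempty_iff_eq_empty] at h1
      have hCmem : ∀ p : ↥F, (p : A × C).2 ∈ C2 := by
        intro p
        have hpCF : (p : A × C).2 ∈ CF := Finset.mem_image_of_mem _ p.2
        by_contra hc
        have : (p : A × C).2 ∈ CF.filter (fun c => ¬ 2 ≤ (F.filter (fun p => p.2 = c)).card) :=
          Finset.mem_filter.mpr ⟨hpCF, fun h => hc (Finset.mem_filter.mpr ⟨hpCF, h⟩)⟩
        rw [h1] at this; exact absurd this (Finset.notMem_empty _)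
      set L : ((↥AF → ℝ) × (↥C2 → ℝ)) →ₗ[ℝ] ℝ :=
        ((∑ a : ↥AF, LinearMap.proj a).comp (LinearMap.fst ℝ _ _)) -
        ((∑ c : ↥C2, LinearMap.proj c).comp (LinearMap.snd ℝ _ _)) with hL
      have hLeval : ∀ u : ((↥AF → ℝ) × (↥C2 → ℝ)),
          L u = (∑ a : ↥AF, u.1 a) - (∑ c : ↥C2, u.2 c) := by
        intro u
        simp [hL, LinearMap.sum_apply, LinearMap.proj_apply]
      have hLT : ∀ d : ↥F → ℝ, L (T d) = 0 := by
        intro d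
        have e1 : ∑ a : ↥AF, (T d).1 a = ∑ p : ↥F, d p := by
          simp_rw [hTapp1]
          have := Finset.sum_fiberwise_of_maps_to (s := (Finset.univ : Finset ↥F))
            (t := (Finset.univ : Finset ↥AF))
            (g := fun p : ↥F => (⟨(p : A × C).1, Finset.mem_image_of_mem _ p.2⟩ : ↥AF))
            (fun _ _ => Finset.mem_univ _) (fun p => d p)
          rw [← this]
          refine Finset.sum_congr rfl (fun a _ => Finset.sum_congr ?_ (fun _ _ => rfl))
          ext p
          simp [Subtype.ext_iff]
        have e2 : ∑ c : ↥C2, (T d).2 c = ∑ p : ↥F, d p := by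
          simp_rw [hTapp2]
          have := Finset.sum_fiberwise_of_maps_to (s := (Finset.univ : Finset ↥F))
            (t := (Finset.univ : Finset ↥C2))
            (g := fun p : ↥F => (⟨(p : A × C).2, hCmem p⟩ : ↥C2))
            (fun _ _ => Finset.mem_univ _) (fun p => d p)
          rw [← this]
          refine Finset.sum_congr rfl (fun c _ => Finset.sum_congr ?_ (fun _ _ => rfl))
          ext p
          simp [Subtype.ext_iff]
        rw [hLeval, e1, e2, sub_self]
      have hrange : LinearMap.range T ≤ LinearMap.ker L := by
        rintro u ⟨d, rfl⟩
        exact LinearMap.mem_ker.mpr (hLT d)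
      -- L is surjective
      obtain ⟨a0, ha0⟩ := hF.image Prod.fst
      have hLne : L ((fun _ => (1:ℝ)), (fun _ => (0:ℝ))) = (AF.card : ℝ) := by
        rw [hLeval]; simp [Fintype.card_coe]
      have hLsurj : Function.Surjective L := by
        intro r
        refine ⟨(r / (AF.card : ℝ)) • ((fun _ => (1:ℝ)), (fun _ => (0:ℝ))), ?_⟩
        rw [map_smul, hLne, smul_eq_mul]
        have hne : (AF.card : ℝ) ≠ 0 := Nat.cast_ne_zero.mpr (Finset.card_pos.mpr ⟨a0, ha0⟩).ne'
        field_simp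
      have hkerL : Module.finrank ℝ (LinearMap.ker L) + 1 = AF.card + C2.card := by
        have h := LinearMap.finrank_range_add_finrank_ker L
        rw [LinearMap.range_eq_top.mpr hLsurj, finrank_top, hdim, Module.finrank_self] at h
        omega
      have hle : Module.finrank ℝ (LinearMap.range T)
          ≤ Module.finrank ℝ (LinearMap.ker L) := Submodule.finrank_mono hrange
      have hC1card : (CF.filter (fun c => ¬ 2 ≤ (F.filter (fun p => p.2 = c)).card)).card = 0 := by
        rw [h1]; rfl
      have hAFpos : 1 ≤ AF.card := Finset.card_pos.mpr hAFne
      omega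
  -- nontrivial kernel
  have hdomdim : Module.finrank ℝ (↥F → ℝ) = F.card := by
    rw [Module.finrank_fintype_fun_eq_card, Fintype.card_coe]
  have hker : LinearMap.ker T ≠ ⊥ := by
    intro h
    have hrn := LinearMap.finrank_range_add_finrank_ker T
    rw [h, finrank_bot, hdomdim] at hrn
    omega
  obtain ⟨d0, hd0mem, hd0ne⟩ := (Submodule.ne_bot_iff _).mp hker
  have hTd0 : T d0 = 0 := LinearMap.mem_ker.mp hd0mem
  -- define d
  set d : A → C → ℝ := fun a c =>
    ∑ p ∈ Finset.univ.filter (fun p : ↥F => (p : A × C) = (a, c)), d0 p with hd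
  have hsupp : ∀ a c, (a, c) ∉ F → d a c = 0 := by
    intro a c hnot
    have he : Finset.univ.filter (fun p : ↥F => (p : A × C) = (a, c)) = ∅ := by
      refine Finset.filter_eq_empty_iff.mpr (fun {p} _ => fun h => hnot (h ▸ p.2))
    simp only [hd]
    rw [he, Finset.sum_empty]
  have hdval : ∀ p : ↥F, d (p : A × C).1 (p : A × C).2 = d0 p := by
    intro p
    have hs : Finset.univ.filter (fun q : ↥F => (q : A × C) = ((p : A × C).1, (p : A × C).2))
        = {p} := by
      ext q
      simp only [Finset.mem_filter, Finset.mem_univ, true_and, Finset.mem_singleton, Prod.mk.eta,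
        Subtype.ext_iff]
    simp only [hd]
    rw [hs, Finset.sum_singleton]
  have hrowsum : ∀ a, ∑ c, d a c = 0 := by
    intro a
    have hsplit : ∑ c, d a c
        = ∑ p ∈ Finset.univ.filter (fun p : ↥F => (p : A × C).1 = a), d0 p := by
      simp only [hd]
      have := Finset.sum_fiberwise_of_maps_to
        (s := Finset.univ.filter (fun p : ↥F => (p : A × C).1 = a))
        (t := (Finset.univ : Finset C))
        (g := fun p : ↥F => (p : A × C).2) (fun _ _ => Finset.mem_univ _) (fun p => d0 p)
      rw [← this]
      refine Finset.sum_congr rfl (fun c _ => Finset.sum_congr ?_ (fun _ _ => rfl))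
      rw [Finset.filter_filter]
      ext p
      simp [Prod.ext_iff, and_comm]
    by_cases ha : a ∈ AF
    · rw [hsplit, ← hTapp1 d0 ⟨a, ha⟩, hTd0]
      rfl
    · rw [hsplit]
      refine Finset.sum_eq_zero (fun p hp => ?_)
      exfalso
      exact ha ((Finset.mem_filter.mp hp).2 ▸ Finset.mem_image_of_mem _ p.2)
  have hcolsum : ∀ c, ∑ a, d a c = 0 ∨ (F.filter (fun p => p.2 = c)).card = 1 := by
    intro c
    have hsplit : ∑ a, d a c
        = ∑ p ∈ Finset.univ.filter (fun p : ↥F => (p : A × C).2 = c), d0 p := by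
      simp only [hd]
      have := Finset.sum_fiberwise_of_maps_to
        (s := Finset.univ.filter (fun p : ↥F => (p : A × C).2 = c))
        (t := (Finset.univ : Finset A))
        (g := fun p : ↥F => (p : A × C).1) (fun _ _ => Finset.mem_univ _) (fun p => d0 p)
      rw [← this]
      refine Finset.sum_congr rfl (fun a _ => Finset.sum_congr ?_ (fun _ _ => rfl))
      rw [Finset.filter_filter]
      ext p
      simp [Prod.ext_iff, and_comm]
    by_cases hc2 : c ∈ C2
    · left
      rw [hsplit, ← hTapp2 d0 ⟨c, hc2⟩, hTd0]
      rfl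
    · by_cases hcCF : c ∈ CF
      · right
        have hge : 1 ≤ (F.filter (fun p => p.2 = c)).card := by
          obtain ⟨p, hp, hpc⟩ := Finset.mem_image.mp hcCF
          exact Finset.card_pos.mpr ⟨p, Finset.mem_filter.mpr ⟨hp, hpc⟩⟩
        have hlt : ¬ 2 ≤ (F.filter (fun p => p.2 = c)).card := by
          intro h
          exact hc2 (Finset.mem_filter.mpr ⟨hcCF, h⟩)
        omega
      · left
        rw [hsplit]
        refine Finset.sum_eq_zero (fun p hp => ?_)
        exfalso
        exact hcCF ((Finset.mem_filter.mp hp).2 ▸ Finset.mem_image_of_mem _ p.2)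
  refine ⟨d, ?_, hsupp, hrowsum, hcolsum⟩
  obtain ⟨p0, hp0⟩ : ∃ p, d0 p ≠ 0 := by
    by_contra h
    push_neg at h
    exact hd0ne (funext h)
  exact ⟨(p0 : A × C).1, (p0 : A × C).2, by rw [hdval p0]; exact hp0⟩

end Helpers
section Helpers2
variable {A C : Type*} [Fintype A] [Fintype C]

/-- The set of fractional entries. -/
noncomputable def Fr [DecidableEq A] [DecidableEq C] (x : A → C → ℝ) : Finset (A × C) :=
  Finset.univ.filter (fun p => ¬ (x p.1 p.2 = 0 ∨ x p.1 p.2 = 1))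

lemma push (x d : A → C → ℝ)
    (hsupp : ∀ a c, (x a c = 0 ∨ x a c = 1) → d a c = 0)
    (hdne : ∃ a c, d a c ≠ 0)
    (hx0 : ∀ a c, 0 ≤ x a c) (hx1 : ∀ a c, x a c ≤ 1) :
    ∃ ε : ℝ, 0 < ε ∧ (∀ a c, 0 ≤ x a c + ε * d a c ∧ x a c + ε * d a c ≤ 1) ∧
      (∃ a c, d a c ≠ 0 ∧ (x a c + ε * d a c = 0 ∨ x a c + ε * d a c = 1)) := by
  classical
  set S : Finset (A × C) := Finset.univ.filter (fun p => d p.1 p.2 ≠ 0) with hS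
  have hSne : S.Nonempty := by
    obtain ⟨a, c, h⟩ := hdne
    exact ⟨(a, c), Finset.mem_filter.mpr ⟨Finset.mem_univ _, h⟩⟩
  set g : A × C → ℝ := fun p => if 0 < d p.1 p.2 then (1 - x p.1 p.2) / d p.1 p.2
    else x p.1 p.2 / (- d p.1 p.2) with hg
  have hfrac : ∀ p ∈ S, 0 < x p.1 p.2 ∧ x p.1 p.2 < 1 := by
    intro p hp
    have hd : d p.1 p.2 ≠ 0 := (Finset.mem_filter.mp hp).2
    have h01 : ¬ (x p.1 p.2 = 0 ∨ x p.1 p.2 = 1) := fun h => hd (hsupp _ _ h)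
    push_neg at h01
    exact ⟨(hx0 _ _).lt_of_ne (Ne.symm h01.1), (hx1 _ _).lt_of_ne h01.2⟩
  set ε := S.inf' hSne g with he
  have hgpos : ∀ p ∈ S, 0 < g p := by
    intro p hp
    obtain ⟨h0, h1⟩ := hfrac p hp
    have hd : d p.1 p.2 ≠ 0 := (Finset.mem_filter.mp hp).2
    rw [hg]
    dsimp only
    split
    · rename_i hdp
      exact div_pos (by linarith) hdp
    · rename_i hnp
      have : d p.1 p.2 < 0 := lt_of_le_of_ne (not_lt.mp hnp) hd
      exact div_pos h0 (by linarith)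
  have hεpos : 0 < ε := (Finset.lt_inf'_iff hSne).mpr hgpos
  have hεle : ∀ p ∈ S, ε ≤ g p := fun p hp => Finset.inf'_le _ hp
  have hbound : ∀ a c, 0 ≤ x a c + ε * d a c ∧ x a c + ε * d a c ≤ 1 := by
    intro a c
    by_cases hd : d a c = 0
    · rw [hd]
      constructor
      · rw [mul_zero, add_zero]; exact hx0 a c
      · rw [mul_zero, add_zero]; exact hx1 a c
    · have hpS : (a, c) ∈ S := Finset.mem_filter.mpr ⟨Finset.mem_univ _, hd⟩
      have hle := hεle _ hpS
      obtain ⟨h0, h1⟩ := hfrac _ hpS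
      rw [hg] at hle
      dsimp only at hle h0 h1 ⊢
      by_cases hdp : 0 < d a c
      · rw [if_pos hdp] at hle
        have key : ε * d a c ≤ 1 - x a c := by
          calc ε * d a c ≤ ((1 - x a c) / d a c) * d a c := by nlinarith
          _ = 1 - x a c := by field_simp
        constructor
        · nlinarith
        · linarith
      · have hdn : d a c < 0 := lt_of_le_of_ne (not_lt.mp hdp) hd
        rw [if_neg hdp] at hle
        have key : ε * (- d a c) ≤ x a c := by
          calc ε * (- d a c) ≤ (x a c / (- d a c)) * (- d a c) := by nlinarith
          _ = x a c := by field_simp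
        constructor
        · linarith
        · nlinarith
  obtain ⟨p0, hp0S, hp0⟩ := S.exists_mem_eq_inf' hSne g
  refine ⟨ε, hεpos, hbound, p0.1, p0.2, (Finset.mem_filter.mp hp0S).2, ?_⟩
  rw [← he] at hp0
  obtain ⟨h0, h1⟩ := hfrac _ hp0S
  have hd : d p0.1 p0.2 ≠ 0 := (Finset.mem_filter.mp hp0S).2
  rw [hg] at hp0
  dsimp only at hp0
  by_cases hdp : 0 < d p0.1 p0.2
  · right
    rw [if_pos hdp] at hp0
    rw [hp0, div_mul_cancel₀ _ hd]
    ring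
  · left
    have hdn : d p0.1 p0.2 < 0 := lt_of_le_of_ne (not_lt.mp hdp) hd
    rw [if_neg hdp] at hp0
    rw [hp0, div_neg, neg_mul, div_mul_cancel₀ _ hd]
    ring

/-- Properties of one side `y = x + ε d` of the split. -/
lemma side [DecidableEq A] [DecidableEq C] (q : C → ℕ) (x d : A → C → ℝ) (ε : ℝ)
    (hx0 : ∀ a c, 0 ≤ x a c) (hq : ∀ c, ∑ a, x a c ≤ (q c : ℝ))
    (hsupp : ∀ a c, (x a c = 0 ∨ x a c = 1) → d a c = 0)
    (hrowd : ∀ a, ∑ c, d a c = 0)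
    (hcold : ∀ c, ∑ a, d a c = 0 ∨ ((Fr x).filter (fun p => p.2 = c)).card = 1)
    (hb : ∀ a c, 0 ≤ x a c + ε * d a c ∧ x a c + ε * d a c ≤ 1)
    (hwit : ∃ a c, d a c ≠ 0 ∧ (x a c + ε * d a c = 0 ∨ x a c + ε * d a c = 1)) :
    (∀ a c, 0 ≤ x a c + ε * d a c) ∧
    (∀ a, ∑ c, (x a c + ε * d a c) = ∑ c, x a c) ∧
    (∀ c, ∑ a, (x a c + ε * d a c) ≤ (q c : ℝ)) ∧
    (∀ a c, x a c = 0 → x a c + ε * d a c = 0) ∧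
    (Fr (fun a c => x a c + ε * d a c)).card < (Fr x).card := by
  classical
  set y : A → C → ℝ := fun a c => x a c + ε * d a c with hy
  have hzero : ∀ a c, x a c = 0 → y a c = 0 := by
    intro a c h
    have : d a c = 0 := hsupp a c (Or.inl h)
    simp only [hy, h, this, mul_zero, add_zero]
  have hrows : ∀ a, ∑ c, y a c = ∑ c, x a c := by
    intro a
    simp only [hy]
    rw [Finset.sum_add_distrib, ← Finset.mul_sum, hrowd, mul_zero, add_zero]
  have hquot : ∀ c, ∑ a, y a c ≤ (q c : ℝ) := by
    intro c
    rcases hcold c with h | h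
    · simp only [hy]
      rw [Finset.sum_add_distrib, ← Finset.mul_sum, h, mul_zero, add_zero]
      exact hq c
    · obtain ⟨p1, hp1⟩ := Finset.card_eq_one.mp h
      have hp1mem : p1 ∈ (Fr x).filter (fun p => p.2 = c) := by rw [hp1]; exact Finset.mem_singleton_self _
      have hp1Fr : p1 ∈ Fr x := (Finset.mem_filter.mp hp1mem).1
      have hp1c : p1.2 = c := (Finset.mem_filter.mp hp1mem).2
      set a1 := p1.1 with ha1
      have hoff : ∀ a, a ≠ a1 → (x a c = 0 ∨ x a c = 1) := by
        intro a ha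
        by_contra hcon
        have : (a, c) ∈ (Fr x).filter (fun p => p.2 = c) :=
          Finset.mem_filter.mpr ⟨Finset.mem_filter.mpr ⟨Finset.mem_univ _, hcon⟩, rfl⟩
        rw [hp1] at this
        have := Finset.mem_singleton.mp this
        exact ha (congrArg Prod.fst this)
      have hyoff : ∀ a, a ≠ a1 → y a c = x a c := by
        intro a ha
        have : d a c = 0 := hsupp a c (hoff a ha)
        simp only [hy, this, mul_zero, add_zero]
      obtain ⟨m, hm⟩ := sum01 (Finset.univ.erase a1) (fun a => x a c)
        (fun a ha => hoff a (Finset.ne_of_mem_erase ha))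
      have hxsplit : x a1 c + ∑ a ∈ Finset.univ.erase a1, x a c = ∑ a, x a c :=
        Finset.add_sum_erase Finset.univ (fun a => x a c) (Finset.mem_univ a1)
      have hysplit : y a1 c + ∑ a ∈ Finset.univ.erase a1, y a c = ∑ a, y a c :=
        Finset.add_sum_erase Finset.univ (fun a => y a c) (Finset.mem_univ a1)
      have hyerase : ∑ a ∈ Finset.univ.erase a1, y a c = ∑ a ∈ Finset.univ.erase a1, x a c :=
        Finset.sum_congr rfl (fun a ha => hyoff a (Finset.ne_of_mem_erase ha))
      -- x a1 c is fractional hence positive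
      have hfr : ¬ (x a1 c = 0 ∨ x a1 c = 1) := by
        have := (Finset.mem_filter.mp hp1Fr).2
        rwa [← ha1, hp1c] at this
        -- p1 = (p1.1, p1.2)
      push_neg at hfr
      have hx1pos : 0 < x a1 c := (hx0 _ _).lt_of_ne (Ne.symm hfr.1)
      -- integer gap
      have hmq : (m : ℝ) + 1 ≤ (q c : ℝ) := by
        have h1 : (m : ℝ) + x a1 c ≤ (q c : ℝ) := by
          rw [hm]; linarith [hxsplit, hq c]
        have h2 : (m : ℝ) < (q c : ℝ) := by linarith
        have h3 : m < q c := by exact_mod_cast h2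
        exact_mod_cast h3
      have hy1 : y a1 c ≤ 1 := (hb a1 c).2
      calc ∑ a, y a c = y a1 c + ∑ a ∈ Finset.univ.erase a1, y a c := hysplit.symm
      _ = y a1 c + (m : ℝ) := by rw [hyerase, ← hm]
      _ ≤ 1 + (m : ℝ) := by linarith
      _ ≤ (q c : ℝ) := by linarith
  have hFsub : Fr y ⊆ Fr x := by
    intro p hp
    by_contra hpx
    have hx01 : x p.1 p.2 = 0 ∨ x p.1 p.2 = 1 := by
      by_contra hcon
      exact hpx (Finset.mem_filter.mpr ⟨Finset.mem_univ _, hcon⟩)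
    have hd0 : d p.1 p.2 = 0 := hsupp _ _ hx01
    have : y p.1 p.2 = x p.1 p.2 := by simp only [hy, hd0, mul_zero, add_zero]
    exact (Finset.mem_filter.mp hp).2 (this ▸ hx01)
  have hFlt : (Fr y).card < (Fr x).card := by
    obtain ⟨a, c, hd, h01⟩ := hwit
    have hmemx : (a, c) ∈ Fr x := by
      refine Finset.mem_filter.mpr ⟨Finset.mem_univ _, fun h => hd (hsupp _ _ h)⟩
    have hnoty : (a, c) ∉ Fr y := by
      intro h
      exact (Finset.mem_filter.mp h).2 h01
    exact Finset.card_lt_card ((Finset.ssubset_iff_of_subset hFsub).mpr ⟨(a, c), hmemx, hnoty⟩)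
  exact ⟨fun a c => (hb a c).1, hrows, hquot, hzero, hFlt⟩

end Helpers2
section Helpers3
variable {A C : Type*} [Fintype A] [Fintype C]

lemma step [DecidableEq A] [DecidableEq C] (q : C → ℕ) (x : A → C → ℝ)
    (hx0 : ∀ a c, 0 ≤ x a c)
    (hq : ∀ c, ∑ a, x a c ≤ (q c : ℝ))
    (hrowint : ∀ a, ∑ c, x a c = 0 ∨ ∑ c, x a c = 1)
    (hFne : (Fr x).Nonempty) :
    ∃ (y z : A → C → ℝ) (l : ℝ), 0 < l ∧ l < 1 ∧
      (∀ a c, x a c = l * y a c + (1 - l) * z a c) ∧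
      (∀ a c, 0 ≤ y a c) ∧ (∀ a c, 0 ≤ z a c) ∧
      (∀ a, ∑ c, y a c = ∑ c, x a c) ∧ (∀ a, ∑ c, z a c = ∑ c, x a c) ∧
      (∀ c, ∑ a, y a c ≤ (q c : ℝ)) ∧ (∀ c, ∑ a, z a c ≤ (q c : ℝ)) ∧
      (∀ a c, x a c = 0 → y a c = 0) ∧ (∀ a c, x a c = 0 → z a c = 0) ∧
      (Fr y).card < (Fr x).card ∧ (Fr z).card < (Fr x).card := by
  classical
  have hx1 : ∀ a c, x a c ≤ 1 := by
    intro a c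
    have h1 : x a c ≤ ∑ c', x a c' :=
      Finset.single_le_sum (fun c' _ => hx0 a c') (Finset.mem_univ c)
    rcases hrowint a with h | h <;> linarith
  have hrow : ∀ a ∈ (Fr x).image Prod.fst, 2 ≤ ((Fr x).filter (fun p => p.1 = a)).card := by
    intro a ha
    obtain ⟨p, hp, hpa⟩ := Finset.mem_image.mp ha
    have h1 : 1 ≤ ((Fr x).filter (fun p => p.1 = a)).card :=
      Finset.card_pos.mpr ⟨p, Finset.mem_filter.mpr ⟨hp, hpa⟩⟩
    by_contra hcon
    have hcard1 : ((Fr x).filter (fun p => p.1 = a)).card = 1 := by omega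
    obtain ⟨p1, hp1⟩ := Finset.card_eq_one.mp hcard1
    have hp1mem : p1 ∈ (Fr x).filter (fun p => p.1 = a) := by
      rw [hp1]; exact Finset.mem_singleton_self _
    have hp1Fr : p1 ∈ Fr x := (Finset.mem_filter.mp hp1mem).1
    have hp1a : p1.1 = a := (Finset.mem_filter.mp hp1mem).2
    have hoff : ∀ c, c ≠ p1.2 → (x a c = 0 ∨ x a c = 1) := by
      intro c hc
      by_contra hcon2
      have hmem : (a, c) ∈ (Fr x).filter (fun p => p.1 = a) :=
        Finset.mem_filter.mpr ⟨Finset.mem_filter.mpr ⟨Finset.mem_univ _, hcon2⟩, rfl⟩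
      rw [hp1] at hmem
      exact hc ((congrArg Prod.snd (Finset.mem_singleton.mp hmem)).symm ▸ rfl)
    obtain ⟨m, hm⟩ := sum01 (Finset.univ.erase p1.2) (fun c => x a c)
      (fun c hc => hoff c (Finset.ne_of_mem_erase hc))
    have hsplit : x a p1.2 + ∑ c ∈ Finset.univ.erase p1.2, x a c = ∑ c, x a c :=
      Finset.add_sum_erase Finset.univ (fun c => x a c) (Finset.mem_univ p1.2)
    rw [← hm] at hsplit
    have hfr : ¬ (x a p1.2 = 0 ∨ x a p1.2 = 1) := by
      have h2 := (Finset.mem_filter.mp hp1Fr).2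
      rwa [hp1a] at h2
    push_neg at hfr
    have h0 : 0 < x a p1.2 := (hx0 _ _).lt_of_ne (Ne.symm hfr.1)
    have h1' : x a p1.2 < 1 := (hx1 _ _).lt_of_ne hfr.2
    have hmnn : (0:ℝ) ≤ (m:ℝ) := Nat.cast_nonneg m
    rcases hrowint a with ht | ht
    · rw [ht] at hsplit; linarith
    · rw [ht] at hsplit
      have hmpos : (0:ℝ) < (m:ℝ) := by linarith
      have : 1 ≤ m := Nat.cast_pos.mp hmpos
      have : (1:ℝ) ≤ (m:ℝ) := by exact_mod_cast this
      linarith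
  obtain ⟨d, hdne, hdsupp, hdrow, hdcol⟩ := core (Fr x) hFne hrow
  have hsupp' : ∀ a c, (x a c = 0 ∨ x a c = 1) → d a c = 0 := by
    intro a c h
    exact hdsupp a c (fun hmem => (Finset.mem_filter.mp hmem).2 h)
  have hsupp'' : ∀ a c, (x a c = 0 ∨ x a c = 1) → -(d a c) = 0 := by
    intro a c h
    rw [hsupp' a c h, neg_zero]
  have hdne'' : ∃ a c, -(d a c) ≠ 0 := by
    obtain ⟨a, c, h⟩ := hdne
    exact ⟨a, c, neg_ne_zero.mpr h⟩
  have hdrow'' : ∀ a, ∑ c, -(d a c) = 0 := by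
    intro a
    rw [Finset.sum_neg_distrib, hdrow, neg_zero]
  have hdcol'' : ∀ c, ∑ a, -(d a c) = 0 ∨ ((Fr x).filter (fun p => p.2 = c)).card = 1 := by
    intro c
    rcases hdcol c with h | h
    · left; rw [Finset.sum_neg_distrib, h, neg_zero]
    · right; exact h
  obtain ⟨ε1, hε1, hb1, hw1⟩ := push x d hsupp' hdne hx0 hx1
  obtain ⟨ε2, hε2, hb2, hw2⟩ := push x (fun a c => -(d a c)) hsupp'' hdne'' hx0 hx1
  obtain ⟨hy0, hyrows, hyq, hyzero, hycard⟩ :=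
    side q x d ε1 hx0 hq hsupp' hdrow hdcol hb1 hw1
  obtain ⟨hz0, hzrows, hzq, hzzero, hzcard⟩ :=
    side q x (fun a c => -(d a c)) ε2 hx0 hq hsupp'' hdrow'' hdcol'' hb2 hw2
  have hsumne : ε1 + ε2 ≠ 0 := by positivity
  refine ⟨fun a c => x a c + ε1 * d a c, fun a c => x a c + ε2 * (-(d a c)),
    ε2 / (ε1 + ε2), div_pos hε2 (by linarith), (div_lt_one (by linarith)).mpr (by linarith),
    ?_, hy0, hz0, hyrows, hzrows, hyq, hzq, hyzero, hzzero, hycard, hzcard⟩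
  intro a c
  field_simp
  ring

lemma decomp_base [DecidableEq A] [DecidableEq C] (q : C → ℕ) (x0 x : A → C → ℝ)
    (hFr : Fr x = ∅)
    (hz : ∀ a c, x0 a c = 0 → x a c = 0)
    (hq : ∀ c, ∑ a, x a c ≤ (q c : ℝ))
    (hrows : ∀ a, ∑ c, x a c = ∑ c, x0 a c) :
    ∃ (k : ℕ) (xs : Fin k → A → C → ℝ) (lam : Fin k → ℝ),
      (∀ i, (∀ a c, xs i a c = 0 ∨ xs i a c = 1) ∧ (∀ a c, x0 a c = 0 → xs i a c = 0) ∧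
        (∀ c, ∑ a, xs i a c ≤ (q c : ℝ)) ∧ (∀ a, ∑ c, xs i a c = ∑ c, x0 a c)) ∧
      (∀ i, 0 ≤ lam i) ∧ (∑ i, lam i = 1) ∧ (∀ a c, x a c = ∑ i, lam i * xs i a c) := by
  have hint : ∀ a c, x a c = 0 ∨ x a c = 1 := by
    intro a c
    by_contra hcon
    have : (a, c) ∈ Fr x := Finset.mem_filter.mpr ⟨Finset.mem_univ _, hcon⟩
    rw [hFr] at this
    exact absurd this (Finset.notMem_empty _)
  exact ⟨1, fun _ => x, fun _ => 1, fun _ => ⟨hint, hz, hq, hrows⟩, fun _ => zero_le_one,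
    by simp, fun a c => by simp⟩

lemma decomp [DecidableEq A] [DecidableEq C] (q : C → ℕ) (x0 : A → C → ℝ)
    (hrow0 : ∀ a, ∑ c, x0 a c = 0 ∨ ∑ c, x0 a c = 1) :
    ∀ (n : ℕ) (x : A → C → ℝ), (Fr x).card ≤ n →
    (∀ a c, 0 ≤ x a c) →
    (∀ a c, x0 a c = 0 → x a c = 0) →
    (∀ c, ∑ a, x a c ≤ (q c : ℝ)) →
    (∀ a, ∑ c, x a c = ∑ c, x0 a c) →
    ∃ (k : ℕ) (xs : Fin k → A → C → ℝ) (lam : Fin k → ℝ),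
      (∀ i, (∀ a c, xs i a c = 0 ∨ xs i a c = 1) ∧ (∀ a c, x0 a c = 0 → xs i a c = 0) ∧
        (∀ c, ∑ a, xs i a c ≤ (q c : ℝ)) ∧ (∀ a, ∑ c, xs i a c = ∑ c, x0 a c)) ∧
      (∀ i, 0 ≤ lam i) ∧ (∑ i, lam i = 1) ∧ (∀ a c, x a c = ∑ i, lam i * xs i a c) := by
  intro n
  induction n with
  | zero =>
    intro x hcard hxnn hz hq hrows
    exact decomp_base q x0 x (Finset.card_eq_zero.mp (Nat.le_zero.mp hcard)) hz hq hrows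
  | succ n ih =>
    intro x hcard hxnn hz hq hrows
    by_cases hFne : (Fr x).Nonempty
    · have hrowint : ∀ a, ∑ c, x a c = 0 ∨ ∑ c, x a c = 1 := by
        intro a
        rw [hrows a]
        exact hrow0 a
      obtain ⟨y, z, l, hl0, hl1, hconv, hy0, hz0, hyrows, hzrows, hyq, hzq,
        hyzero, hzzero, hycard, hzcard⟩ := step q x hxnn hq hrowint hFne
      obtain ⟨k1, xs1, lam1, hxs1, hlam1, hlamsum1, hconv1⟩ := ih y (by omega) hy0
        (fun a c h => hyzero a c (hz a c h)) hyq (fun a => (hyrows a).trans (hrows a))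
      obtain ⟨k2, xs2, lam2, hxs2, hlam2, hlamsum2, hconv2⟩ := ih z (by omega) hz0
        (fun a c h => hzzero a c (hz a c h)) hzq (fun a => (hzrows a).trans (hrows a))
      refine ⟨k1 + k2, Fin.addCases xs1 xs2,
        Fin.addCases (fun i => l * lam1 i) (fun j => (1 - l) * lam2 j), ?_, ?_, ?_, ?_⟩
      · intro i
        refine Fin.addCases (fun i1 => ?_) (fun j => ?_) i
        · simpa only [Fin.addCases_left] using hxs1 i1
        · simpa only [Fin.addCases_right] using hxs2 j
      · intro i
        refine Fin.addCases (fun i1 => ?_) (fun j => ?_) i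
        · simpa only [Fin.addCases_left] using mul_nonneg hl0.le (hlam1 i1)
        · simpa only [Fin.addCases_right] using
            mul_nonneg (by linarith : (0:ℝ) ≤ 1 - l) (hlam2 j)
      · rw [Fin.sum_univ_add]
        simp only [Fin.addCases_left, Fin.addCases_right]
        rw [← Finset.mul_sum, ← Finset.mul_sum, hlamsum1, hlamsum2]
        ring
      · intro a c
        rw [Fin.sum_univ_add]
        simp only [Fin.addCases_left, Fin.addCases_right]
        rw [hconv a c, hconv1 a c, hconv2 a c, Finset.mul_sum, Finset.mul_sum]
        congr 1 <;> exact Finset.sum_congr rfl (fun i _ => by ring)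
    · rw [Finset.not_nonempty_iff_eq_empty] at hFne
      exact decomp_base q x0 x hFne hz hq hrows

end Helpers3


theorem stmt15 {A C : Type*} [Fintype A] [Fintype C] (I : AllocInstance A C)
    (hpre : I.TotalPreorder)
    (x : A → C → ℝ) (hval : I.Valid x)
    (htot : ∀ a, (∑ c, x a c) = 0 ∨ (∑ c, x a c) = 1) :
    ∃ (k : ℕ) (xs : Fin k → A → C → ℝ) (lam : Fin k → ℝ),
      (∀ i, I.Valid (xs i) ∧ I.Integral (xs i)) ∧
      (∀ i, 0 ≤ lam i) ∧ (∑ i, lam i = 1) ∧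
      (∀ a c, x a c = ∑ i, lam i * xs i a c) ∧
      (∀ i a, ∑ c, xs i a c = ∑ c, x a c) := by
  classical
  obtain ⟨⟨hnn, hER, hQR, hUD⟩, hPR, hPE⟩ := hval
  obtain ⟨k, xs, lam, hxs, hlam, hlamsum, hconv⟩ :=
    decomp I.quota x htot (Fr x).card x le_rfl hnn (fun a c h => h) hQR (fun a => rfl)
  refine ⟨k, xs, lam, ?_, hlam, hlamsum, hconv, ?_⟩
  · intro i
    obtain ⟨hint, hzero, hqi, hrows⟩ := hxs i
    have hnn_i : ∀ a c, 0 ≤ xs i a c := by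
      intro a c
      rcases hint a c with h | h <;> rw [h] <;> norm_num
    have hfeas : I.Feasible (xs i) :=
      ⟨hnn_i, fun a c h => hzero a c (hER a c h), hqi,
        fun a => by rw [hrows a]; exact hUD a⟩
    have hPRi : I.PR (xs i) := by
      intro c a ha a' ha' hstrict hpos
      have hxac : 0 < x a c := by
        have hne : x a c ≠ 0 := fun h => (ne_of_gt hpos) (hzero a c h)
        exact (hnn a c).lt_of_ne (Ne.symm hne)
      rw [hrows a']
      exact hPR c a ha a' ha' hstrict hxac
    have hPEi : I.PE (xs i) := by
      rintro ⟨w, hwf, hwPR, hwge, a0, hlt⟩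
      refine hPE ⟨w, hwf, hwPR, fun a => ?_, a0, ?_⟩
      · rw [← hrows a]; exact hwge a
      · rw [← hrows a0]; exact hlt
    exact ⟨⟨hfeas, hPRi, hPEi⟩, hint⟩
  · intro i a
    exact (hxs i).2.2.2 a
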